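/- In a free group F, two nontrivial elements x and y commute if and only if there exist nonzero integers c and d such that x^c = y^d. -/

import Mathlib

/-- Distinct generators of a free group do not commute. -/
theorem auxL0 {ι : Type*} (i j : ι) (h : Commute (FreeGroup.of i) (FreeGroup.of j)) : i = j := by
  classical
  by_contra hij
  have := congrArg (FreeGroup.lift (fun k => if k = i then Equiv.swap 0 1
    else if k = j then Equiv.swap 1 2 else (1 : Equiv.Perm (Fin 3)))) h
  simp only [map_mul, FreeGroup.lift_apply_of, if_pos rfl, if_neg hij, if_neg (Ne.symm hij)] at this
  revert this; decide

/-- A free group on a subsingleton type is cyclic. -/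
theorem auxS {ι : Type*} [Subsingleton ι] :
    ∃ z : FreeGroup ι, ∀ g : FreeGroup ι, ∃ n : ℤ, g = z ^ n := by
  by_cases h : Nonempty ι
  · obtain ⟨i⟩ := h
    refine ⟨FreeGroup.of i, fun g => ?_⟩
    have hg : g ∈ Subgroup.zpowers (FreeGroup.of i) := by
      have hle : (⊤ : Subgroup (FreeGroup ι)) ≤ Subgroup.zpowers (FreeGroup.of i) := by
        rw [← FreeGroup.closure_range_of ι]
        apply Subgroup.closure_le _ |>.2
        rintro _ ⟨j, rfl⟩
        rw [Subsingleton.elim j i]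
        exact Subgroup.mem_zpowers _
      exact hle trivial
    obtain ⟨n, hn⟩ := hg
    exact ⟨n, hn.symm⟩
  · refine ⟨1, fun g => ⟨1, ?_⟩⟩
    have e : ∀ w : FreeGroup ι, w = 1 := by
      intro w
      induction w using FreeGroup.induction_on with
      | C1 => rfl
      | of a => exact absurd ⟨a⟩ h
      | inv_of a ih => rw [ih]; simp
      | mul a b iha ihb => rw [iha, ihb]; simp
    rw [e g, e (1 ^ 1)]

/-- A free group on a subsingleton type is torsion-free. -/
theorem auxT {ι : Type*} [Subsingleton ι] (g : FreeGroup ι) (n : ℤ) (hn : n ≠ 0)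
    (h : g ^ n = 1) : g = 1 := by
  rcases isEmpty_or_nonempty ι with hι | ⟨⟨i⟩⟩
  · clear h
    induction g using FreeGroup.induction_on with
    | C1 => rfl
    | of a => exact hι.elim a
    | inv_of a ih => rw [ih]; simp
    | mul a b iha ihb => rw [iha, ihb]; simp
  · obtain ⟨z, hz⟩ := auxS (ι := ι)
    obtain ⟨m, rfl⟩ := hz g
    rcases eq_or_ne m 0 with rfl | hm
    · simp
    exfalso
    set φ := FreeGroup.lift (fun _ : ι => Multiplicative.ofAdd (1:ℤ)) with hφdef
    set a := Multiplicative.toAdd (φ z) with ha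
    obtain ⟨k, hk⟩ := hz (FreeGroup.of i)
    have h1 : k * a = 1 := by
      have := congrArg (fun w => Multiplicative.toAdd (φ w)) hk
      simpa [map_zpow, toAdd_zpow, φ, smul_eq_mul] using this.symm
    have h2 : m * n * a = 0 := by
      have := congrArg (fun w => Multiplicative.toAdd (φ w)) h
      simp only [map_zpow, toAdd_zpow, map_one, toAdd_one, smul_eq_mul] at this
      linarith [this]
    have ha0 : a ≠ 0 := by rintro h0; rw [h0, mul_zero] at h1; exact one_ne_zero h1.symm
    have hmn : m * n = 0 := by
      rcases mul_eq_zero.1 h2 with h' | h'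
      · exact h'
      · exact absurd h' ha0
    rcases mul_eq_zero.1 hmn with h' | h'
    · exact hm h'
    · exact hn h'

/-- Commuting elements of a free group are powers of a common element. -/
theorem auxM {α : Type*} (x y : FreeGroup α) (h : Commute x y) :
    ∃ z : FreeGroup α, ∃ m n : ℤ, x = z ^ m ∧ y = z ^ n := by
  set H := Subgroup.closure ({x, y} : Set (FreeGroup α)) with hH
  have hcomm : ∀ g ∈ H, ∀ g' ∈ H, Commute g g' := by
    intro g hg g' hg'
    induction hg, hg' using Subgroup.closure_induction₂ with
    | mem a b ha hb =>
      rcases ha with rfl | ha <;> rcases hb with rfl | hb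
      · exact Commute.refl _
      · rw [Set.mem_singleton_iff] at hb; subst hb; exact h
      · rw [Set.mem_singleton_iff] at ha; subst ha; exact h.symm
      · rw [Set.mem_singleton_iff] at ha hb; subst ha; subst hb; exact Commute.refl _
    | one_left b hb => exact Commute.one_left _
    | one_right a ha => exact Commute.one_right _
    | mul_left a b c _ _ _ h1 h2 => exact h1.mul_left h2
    | mul_right a b c _ _ _ h1 h2 => exact h1.mul_right h2
    | inv_left a b _ _ h1 => exact h1.inv_left
    | inv_right a b _ _ h1 => exact h1.inv_right
  obtain ⟨ι, ⟨b⟩⟩ := IsFreeGroup.nonempty_basis (G := H)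
  have hsub : Subsingleton ι := by
    constructor
    intro i j
    apply auxL0 i j
    have hc : Commute (b i) (b j) :=
      Subtype.ext (hcomm _ (b i).2 _ (b j).2)
    have h2 := hc.map b.repr.toMonoidHom
    simpa using h2
  obtain ⟨z', hz'⟩ := auxS (ι := ι)
  refine ⟨(b.repr.symm z' : H), ?_⟩
  have key : ∀ g : FreeGroup α, ∀ hg : g ∈ H,
      ∃ n : ℤ, g = ((b.repr.symm z' : H) : FreeGroup α) ^ n := by
    intro g hg
    obtain ⟨n, hn⟩ := hz' (b.repr ⟨g, hg⟩)
    refine ⟨n, ?_⟩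
    have h2 : (⟨g, hg⟩ : H) = b.repr.symm z' ^ n := by
      apply b.repr.injective
      rw [map_zpow, MulEquiv.apply_symm_apply, hn]
    have := congrArg (Subtype.val) h2
    simpa using this
  obtain ⟨m, hm⟩ := key x (Subgroup.subset_closure (by simp))
  obtain ⟨n, hn⟩ := key y (Subgroup.subset_closure (by simp))
  exact ⟨m, n, hm, hn⟩

/-- Forward direction: commuting nontrivial elements have a common power. -/
theorem auxP {α : Type*} (x y : FreeGroup α) (hx : x ≠ 1) (hy : y ≠ 1) (h : Commute x y) :
    ∃ c d : ℤ, c ≠ 0 ∧ d ≠ 0 ∧ x ^ c = y ^ d := by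
  obtain ⟨z, m, n, rfl, rfl⟩ := auxM x y h
  have hm : m ≠ 0 := by rintro rfl; simp at hx
  have hn : n ≠ 0 := by rintro rfl; simp at hy
  exact ⟨n, m, hn, hm, by rw [← zpow_mul, ← zpow_mul, mul_comm]⟩

/-- An element commuting with two distinct generators is trivial. -/
theorem auxZ {ι : Type*} {i j : ι} (hij : i ≠ j) (w : FreeGroup ι)
    (hi : Commute w (FreeGroup.of i)) (hj : Commute w (FreeGroup.of j)) : w = 1 := by
  classical
  by_contra hw
  obtain ⟨c, d, hc, hd, hcd⟩ := auxP w (FreeGroup.of i) hw (FreeGroup.of_ne_one i) hi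
  obtain ⟨c', d', hc', hd', hcd'⟩ := auxP w (FreeGroup.of j) hw (FreeGroup.of_ne_one j) hj
  have key : (FreeGroup.of i : FreeGroup ι) ^ (d * c') = (FreeGroup.of j) ^ (d' * c) :=
    calc (FreeGroup.of i : FreeGroup ι) ^ (d * c') = ((FreeGroup.of i) ^ d) ^ c' := by
          rw [zpow_mul]
      _ = (w ^ c) ^ c' := by rw [hcd]
      _ = (w ^ c') ^ c := by rw [← zpow_mul, mul_comm, zpow_mul]
      _ = ((FreeGroup.of j) ^ d') ^ c := by rw [hcd']
      _ = (FreeGroup.of j) ^ (d' * c) := by rw [zpow_mul]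
  have hφ := congrArg (fun g => Multiplicative.toAdd
    (FreeGroup.lift (fun k => if k = i then Multiplicative.ofAdd (1:ℤ) else 1) g)) key
  simp only [map_zpow, FreeGroup.lift_apply_of, if_pos rfl, if_neg (Ne.symm hij), toAdd_zpow,
    one_zpow, toAdd_one, toAdd_ofAdd, smul_eq_mul, mul_one, mul_zero, if_true,
    eq_self_iff_true] at hφ
  exact mul_ne_zero hd hc' hφ

/-- Free groups are torsion-free. -/
theorem auxTF {α : Type*} (x : FreeGroup α) (n : ℤ) (hn : n ≠ 0) (h : x ^ n = 1) : x = 1 := by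
  have hx : x ∈ Subgroup.zpowers x := Subgroup.mem_zpowers x
  obtain ⟨ι, ⟨b⟩⟩ := IsFreeGroup.nonempty_basis (G := Subgroup.zpowers x)
  have hsub : Subsingleton ι := by
    constructor
    intro i j
    apply auxL0 i j
    obtain ⟨ki, hki⟩ := (b i).2
    obtain ⟨kj, hkj⟩ := (b j).2
    have hc : Commute (b i) (b j) := by
      apply Subtype.ext
      show ((b i : FreeGroup α)) * (b j) = (b j) * (b i)
      rw [← hki, ← hkj]
      exact (Commute.zpow_zpow_self x ki kj)
    have h2 := hc.map b.repr.toMonoidHom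
    simpa using h2
  have h1 : b.repr ⟨x, hx⟩ ^ n = 1 := by
    rw [← map_zpow]
    convert map_one b.repr.toMonoidHom using 2
    rw [show (⟨x, hx⟩ : Subgroup.zpowers x) ^ n = 1 from Subtype.ext h]
    simp
  have h3 := auxT _ n hn h1
  have := congrArg Subtype.val (b.repr.injective (h3.trans (map_one b.repr.toMonoidHom).symm))
  simpa using this

/-- In a free group, an element commuting with a nonzero power of `b` commutes with `b`. -/
theorem auxR {α : Type*} (a b : FreeGroup α) (n : ℤ) (hn : n ≠ 0) (hb : b ≠ 1)
    (h : Commute a (b ^ n)) : Commute a b := by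
  set C := Subgroup.centralizer ({b ^ n} : Set (FreeGroup α)) with hC
  have ha : a ∈ C := by
    rw [Subgroup.mem_centralizer_iff]
    rintro g (rfl : g = b ^ n)
    exact h.symm.eq
  have hbC : b ∈ C := by
    rw [Subgroup.mem_centralizer_iff]
    rintro g (rfl : g = b ^ n)
    exact (Commute.zpow_self b n).eq
  have hbnC : b ^ n ∈ C := by
    rw [Subgroup.mem_centralizer_iff]
    rintro g (rfl : g = b ^ n)
    rfl
  obtain ⟨ι, ⟨bb⟩⟩ := IsFreeGroup.nonempty_basis (G := C)
  set w := bb.repr ⟨b ^ n, hbnC⟩ with hw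
  have hwc : ∀ g : FreeGroup ι, Commute w g := by
    intro g
    have hcen : Commute (⟨b ^ n, hbnC⟩ : C) (bb.repr.symm g) := by
      apply Subtype.ext
      exact (Subgroup.mem_centralizer_iff.1 (bb.repr.symm g).2 _ rfl)
    have h2 := hcen.map bb.repr.toMonoidHom
    simpa using h2
  have hwne : w ≠ 1 := by
    intro h1
    apply hb
    have hbn1 : b ^ n = 1 := by
      have := congrArg Subtype.val
        (bb.repr.injective (h1.trans (map_one bb.repr.toMonoidHom).symm))
      simpa using this
    exact auxTF b n hn hbn1
  have hsub : Subsingleton ι := by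
    constructor
    intro i j
    by_contra hij
    exact hwne (auxZ hij w (hwc _) (hwc _))
  obtain ⟨z, hz⟩ := auxS (ι := ι)
  obtain ⟨p, hp⟩ := hz (bb.repr ⟨a, ha⟩)
  obtain ⟨q, hq⟩ := hz (bb.repr ⟨b, hbC⟩)
  have hcomm : Commute (bb.repr ⟨a, ha⟩) (bb.repr ⟨b, hbC⟩) := by
    rw [hp, hq]; exact Commute.zpow_zpow_self z p q
  have h2 := hcomm.map bb.repr.symm.toMonoidHom
  simp only [MulEquiv.coe_toMonoidHom, MulEquiv.symm_apply_apply] at h2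
  have := congrArg Subtype.val h2.eq
  exact (by simpa using this : a * b = b * a)

/-- In a free group, two nontrivial elements `x` and `y` commute if and only if there exist
nonzero integers `c`, `d` such that `x^c = y^d`. -/
theorem stmt2 {α : Type*} (x y : FreeGroup α) (hx : x ≠ 1) (hy : y ≠ 1) :
    Commute x y ↔ ∃ c d : ℤ, c ≠ 0 ∧ d ≠ 0 ∧ x ^ c = y ^ d := by
  constructor
  · exact auxP x y hx hy
  · rintro ⟨c, d, hc, hd, hcd⟩
    have h1 : Commute x (y ^ d) := by rw [← hcd]; exact (Commute.refl x).zpow_right c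
    exact auxR x y d hd hy h1
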